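/- Let $A$ be a set, $B \subseteq A$ finite, $n \in \omega$, and define $\sim_t$ on $A\setminus B$ as above for $t \in \mathrm{fin}(A)^n$. Define the preorder $t \sqsubseteq u$ iff ${\sim_u} \subseteq {\sim_t}$. Then every $\sqsubseteq$-chain in $\mathrm{fin}(A)^n$ without repetition has length at most $2^{(|B| + 2^n + 1)\cdot n}$. -/

import Mathlib

/-- With `t ⊑ u` iff `∼ᵤ ⊆ ∼ₜ` (where `∼ₜ` relates `a, a' ∉ B` iff they lie
in the same coordinates of `t`), every ⊑-chain in `fin(A)ⁿ` without
repetition has length at most `2^((|B| + 2ⁿ + 1)·n)`. -/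
theorem stmt_18 (A : Type) (B : Finset A) (n : ℕ) (L : ℕ)
    (h : Fin L → (Fin n → Finset A)) (hinj : Function.Injective h)
    (hchain : ∀ (i : Fin L) (hi : i.val + 1 < L),
      ∀ a a', a ∉ B → a' ∉ B →
        (∀ k, a ∈ h i k ↔ a' ∈ h i k) →
        (∀ k, a ∈ h ⟨i.val + 1, hi⟩ k ↔ a' ∈ h ⟨i.val + 1, hi⟩ k)) :
    L ≤ 2 ^ ((B.card + 2 ^ n + 1) * n) := by
  classical
  rcases Nat.eq_zero_or_pos L with hL | pos0
  · simp [hL]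
  have chain' : ∀ m (hm : m < L), ∀ a a', a ∉ B → a' ∉ B →
      (∀ k, a ∈ h ⟨0, pos0⟩ k ↔ a' ∈ h ⟨0, pos0⟩ k) →
      (∀ k, a ∈ h ⟨m, hm⟩ k ↔ a' ∈ h ⟨m, hm⟩ k) := by
    intro m
    induction m with
    | zero => intro hm a a' ha ha' h0; exact h0
    | succ m ih =>
      intro hm a a' ha ha' h0
      exact hchain ⟨m, Nat.lt_of_succ_lt hm⟩ hm a a' ha ha'
        (ih (Nat.lt_of_succ_lt hm) a a' ha ha' h0)
  set c : Fin L → A → (Fin n → Bool) := fun i a k => decide (a ∈ h i k) with hc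
  have hcfac : ∀ (i : Fin L) a a', a ∉ B → a' ∉ B →
      c ⟨0, pos0⟩ a = c ⟨0, pos0⟩ a' → c i a = c i a' := by
    intro i a a' ha ha' h0
    funext k
    have h0' : ∀ k, a ∈ h ⟨0, pos0⟩ k ↔ a' ∈ h ⟨0, pos0⟩ k := by
      intro k
      have := congrFun h0 k
      simpa [hc] using this
    have := chain' i.val i.isLt a a' ha ha' h0' k
    simp [hc, this]
  let g : Fin L → (Fin n → Bool) → (Fin n → Bool) := fun i v =>
    if hv : ∃ a, a ∉ B ∧ c ⟨0, pos0⟩ a = v then c i hv.choose else v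
  have hg : ∀ (i : Fin L) a, a ∉ B → g i (c ⟨0, pos0⟩ a) = c i a := by
    intro i a ha
    have hv : ∃ b, b ∉ B ∧ c ⟨0, pos0⟩ b = c ⟨0, pos0⟩ a := ⟨a, ha, rfl⟩
    simp only [g, dif_pos hv]
    exact hcfac i hv.choose a hv.choose_spec.1 ha hv.choose_spec.2
  let F : Fin L → (Fin n → (↥B → Bool)) × ((Fin n → Bool) → (Fin n → Bool)) :=
    fun i => (fun k b => decide ((b : A) ∈ h i k), g i)
  have hF : Function.Injective F := by
    intro i j hij
    apply hinj
    funext k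
    ext a
    by_cases ha : a ∈ B
    · have := congrFun (congrFun (congrArg Prod.fst hij) k) ⟨a, ha⟩
      simpa [F] using this
    · have h1 : g i (c ⟨0, pos0⟩ a) = g j (c ⟨0, pos0⟩ a) :=
        congrFun (congrArg Prod.snd hij) _
      rw [hg i a ha, hg j a ha] at h1
      have := congrFun h1 k
      simpa [hc] using this
  have hcard := Fintype.card_le_of_injective F hF
  have hcard2 : L ≤ (2 ^ B.card) ^ n * (2 ^ n) ^ (2 ^ n) := by
    simpa [Fintype.card_fun, Fintype.card_prod] using hcard
  calc L ≤ (2 ^ B.card) ^ n * (2 ^ n) ^ (2 ^ n) := hcard2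
    _ = 2 ^ (B.card * n + n * 2 ^ n) := by
        rw [← pow_mul, ← pow_mul, ← pow_add]
    _ ≤ 2 ^ ((B.card + 2 ^ n + 1) * n) := by
        apply Nat.pow_le_pow_right (by norm_num)
        ring_nf
        nlinarith []
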